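/- Let E be a vector lattice with e ∈ E⁺ such that f^[2] := sup_{λ∈ℝ}(2λf − λ²e) exists for all f ∈ E. If {xₙ} is a sequence in E⁺ and f ∈ E⁺ with xₙ ↑ f (the sequence is increasing with supremum f), then xₙ^[2] is an increasing sequence in E⁺ with supremum f^[2], i.e., xₙ^[2] ↑ f^[2]. -/
import Mathlib

lemma smul_isLUB {E : Type*} [Lattice E] [AddCommGroup E]
    [Module ℝ E] [PosSMulMono ℝ E] {c : ℝ} (hc : 0 < c)
    {S : Set E} {f : E} (h : IsLUB S f) : IsLUB ((c • ·) '' S) (c • f) := by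
  constructor
  · rintro _ ⟨s, hs, rfl⟩
    exact smul_le_smul_of_nonneg_left (h.1 hs) hc.le
  · intro u hu
    have hf : f ≤ c⁻¹ • u := by
      apply h.2
      intro s hs
      have := hu ⟨s, hs, rfl⟩
      have := smul_le_smul_of_nonneg_left this (inv_nonneg.2 hc.le)
      rwa [inv_smul_smul₀ hc.ne'] at this
    have := smul_le_smul_of_nonneg_left hf hc.le
    rwa [smul_inv_smul₀ hc.ne'] at this

theorem square_order_continuous {E : Type*} [Lattice E] [AddCommGroup E]
    [Module ℝ E] [CovariantClass E E (· + ·) (· ≤ ·)] [PosSMulMono ℝ E]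
    (e : E) (he : 0 ≤ e) (sq : E → E)
    (hsq : ∀ f : E, IsLUB (Set.range fun l : ℝ => (2 * l) • f - (l ^ 2) • e) (sq f))
    (x : ℕ → E) (f : E) (hxpos : ∀ n, 0 ≤ x n) (hfpos : 0 ≤ f)
    (hmono : Monotone x) (hlub : IsLUB (Set.range x) f) :
    (∀ n, 0 ≤ sq (x n)) ∧ Monotone (fun n => sq (x n)) ∧
      IsLUB (Set.range fun n => sq (x n)) (sq f) := by
  -- 0 ≤ sq g for any g (λ = 0 term)
  have hpos : ∀ g : E, 0 ≤ sq g := by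
    intro g
    have := (hsq g).1 ⟨0, rfl⟩
    simpa using this
  -- monotonicity of sq on nonnegative elements
  have hsqmono : ∀ g h : E, 0 ≤ g → g ≤ h → sq g ≤ sq h := by
    intro g h hg hgh
    apply (hsq g).2
    rintro _ ⟨l, rfl⟩
    rcases le_or_gt 0 l with hl | hl
    · refine le_trans ?_ ((hsq h).1 ⟨l, rfl⟩)
      have : (2 * l) • g ≤ (2 * l) • h :=
        smul_le_smul_of_nonneg_left hgh (by linarith)
      exact sub_le_sub_right this _
    · have h1 : (2 * l) • g ≤ 0 := by
        have h0 : (0:E) ≤ (-(2 * l)) • g := by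
          simpa using smul_le_smul_of_nonneg_left hg (by linarith : (0:ℝ) ≤ -(2*l))
        rw [neg_smul] at h0
        exact neg_nonneg.mp h0
      have h2 : (0:E) ≤ (l ^ 2) • e := by simpa using smul_le_smul_of_nonneg_left he (sq_nonneg l)
      calc (2 * l) • g - (l ^ 2) • e ≤ 0 := by
            simpa using sub_le_sub h1 h2
        _ ≤ sq h := hpos h
  refine ⟨fun n => hpos _, fun m n hmn => hsqmono _ _ (hxpos m) (hmono hmn), ?_⟩
  constructor
  · rintro _ ⟨n, rfl⟩
    exact hsqmono _ _ (hxpos n) (hlub.1 ⟨n, rfl⟩)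
  · intro u hu
    have hu0 : (0:E) ≤ u := le_trans (hpos (x 0)) (hu ⟨0, rfl⟩)
    apply (hsq f).2
    rintro _ ⟨l, rfl⟩
    rcases lt_trichotomy l 0 with hl | hl | hl
    · have h1 : (2 * l) • f ≤ 0 := by
        have h0 : (0:E) ≤ (-(2 * l)) • f := by
          simpa using smul_le_smul_of_nonneg_left hfpos (by linarith : (0:ℝ) ≤ -(2*l))
        rw [neg_smul] at h0
        exact neg_nonneg.mp h0
      have h2 : (0:E) ≤ (l ^ 2) • e := by simpa using smul_le_smul_of_nonneg_left he (sq_nonneg l)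
      calc (2 * l) • f - (l ^ 2) • e ≤ 0 := by simpa using sub_le_sub h1 h2
        _ ≤ u := hu0
    · simpa [hl] using hu0
    · -- λ > 0: (2l)•f is LUB of (2l)•xₙ
      have hL := smul_isLUB (c := 2 * l) (by linarith) hlub
      have : (2 * l) • f ≤ u + (l ^ 2) • e := by
        apply hL.2
        rintro _ ⟨_, ⟨n, rfl⟩, rfl⟩
        have h1 : (2 * l) • x n - (l ^ 2) • e ≤ sq (x n) := (hsq (x n)).1 ⟨l, rfl⟩
        have h2 : sq (x n) ≤ u := hu ⟨n, rfl⟩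
        exact sub_le_iff_le_add.mp (le_trans h1 h2)
      exact sub_le_iff_le_add.mpr this
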